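/- Let n ≥ 1, let α_0 < α_1 < … < α_n be real numbers, and let 0 ≤ a < b; if a = 0 assume additionally that α_0 = 0 and all α_i ≥ 0. Let L be a real linear functional on the linear span V of the power functions x^{α_0}, …, x^{α_n} on [a,b]. Then the following are equivalent: (i) there exists a (positive Borel) measure μ on [a,b] such that L(x^{α_i}) = ∫_{[a,b]} x^{α_i} dμ(x) for all i = 0, …, n; (ii) L(p) ≥ 0 for every p ∈ V with p ≥ 0 on [a,b]. -/

import Mathlib

open MeasureTheory

lemma isCompact_convexHull_of_isCompact {d : ℕ} {K : Set (Fin d → ℝ)}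
    (hK : IsCompact K) (hne : K.Nonempty) : IsCompact (convexHull ℝ K) := by
  classical
  obtain ⟨z₀, hz₀⟩ := hne
  set S : Set ((Fin (d + 1) → ℝ) × (Fin (d + 1) → (Fin d → ℝ))) :=
    (stdSimplex ℝ (Fin (d + 1))) ×ˢ (Set.univ.pi fun _ => K) with hS
  have hScomp : IsCompact S := (isCompact_stdSimplex (𝕜 := ℝ) (ι := Fin (d + 1))).prod (isCompact_univ_pi fun _ => hK)
  have hfcont : Continuous fun p : (Fin (d + 1) → ℝ) × (Fin (d + 1) → (Fin d → ℝ)) =>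
      ∑ j, p.1 j • p.2 j := by
    apply continuous_finset_sum
    intro j _
    exact ((continuous_apply j).comp continuous_fst).smul ((continuous_apply j).comp continuous_snd)
  have himg : convexHull ℝ K =
      (fun p : (Fin (d + 1) → ℝ) × (Fin (d + 1) → (Fin d → ℝ)) => ∑ j, p.1 j • p.2 j) '' S := by
    apply Set.Subset.antisymm
    · intro x hx
      obtain ⟨ι, hfin, z, w, hrange, hai, hpos, hsum, hx⟩ :=
        eq_pos_convex_span_of_mem_convexHull hx
      letI := hfin
      have hcard : Fintype.card ι ≤ d + 1 := by
        refine hai.card_le_finrank_succ.trans ?_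
        have h1 : Module.finrank ℝ (vectorSpan ℝ (Set.range z)) ≤ Module.finrank ℝ (Fin d → ℝ) :=
          Submodule.finrank_le _
        have h2 : Module.finrank ℝ (Fin d → ℝ) = d := by simp [Module.finrank_pi]
        omega
      obtain ⟨e⟩ : Nonempty (ι ↪ Fin (d + 1)) :=
        Function.Embedding.nonempty_of_card_le (by simpa using hcard)
      set W : Fin (d + 1) → ℝ := fun j => ∑ i, if e i = j then w i else 0 with hW
      set Z : Fin (d + 1) → (Fin d → ℝ) :=
        fun j => if h : ∃ i, e i = j then z h.choose else z₀ with hZ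
      refine ⟨(W, Z), ⟨⟨fun j => ?_, ?_⟩, fun j _ => ?_⟩, ?_⟩
      · exact Finset.sum_nonneg fun i _ => by split <;> simp [le_of_lt (hpos i)]
      · rw [hW]
        rw [Finset.sum_comm]
        simpa using hsum
      · rw [hZ]
        dsimp only
        split
        · exact hrange (Set.mem_range_self _)
        · exact hz₀
      · dsimp only
        have hZe : ∀ i : ι, Z (e i) = z i := by
          intro i
          have hex : ∃ i', e i' = e i := ⟨i, rfl⟩
          rw [hZ]
          simp only [hex, dif_pos]
          have := hex.choose_spec
          have : hex.choose = i := e.injective this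
          rw [this]
        calc ∑ j, W j • Z j = ∑ j, ∑ i, (if e i = j then w i • Z j else 0) := by
              refine Finset.sum_congr rfl fun j _ => ?_
              rw [hW]
              rw [Finset.sum_smul]
              refine Finset.sum_congr rfl fun i _ => ?_
              split <;> simp
          _ = ∑ i, ∑ j, (if e i = j then w i • Z j else 0) := Finset.sum_comm
          _ = ∑ i, w i • Z (e i) := by
              refine Finset.sum_congr rfl fun i _ => ?_
              simp
          _ = ∑ i, w i • z i := by simp [hZe]
          _ = x := hx
    · rintro x ⟨⟨w, z⟩, ⟨⟨hw0, hw1⟩, hz⟩, rfl⟩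
      exact (convex_convexHull ℝ K).sum_mem (fun j _ => hw0 j) hw1
        (fun j _ => subset_convexHull ℝ K (hz j (Set.mem_univ j)))
  rw [himg]
  exact hScomp.image hfcont

/-- sparse truncated Hausdorff moment problem on `[a,b]`: for real
exponents `α 0 < … < α n` and `0 ≤ a < b` (with `α 0 = 0` and all `α i ≥ 0` when
`a = 0`), a linear functional `L` on the span of the power functions
`x ^ (α 0), …, x ^ (α n)` on `[a,b]` (recorded through coefficient vectors) is a
truncated `[a,b]`-moment functional iff it is non-negative on every element of the
span that is non-negative on `[a,b]`. -/
theorem sparse_truncated_hausdorff_moment_problem (n : ℕ) (hn : 1 ≤ n)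
    (α : Fin (n + 1) → ℝ) (hα : StrictMono α)
    (a b : ℝ) (ha : 0 ≤ a) (hab : a < b)
    (h0 : a = 0 → α 0 = 0 ∧ ∀ i, 0 ≤ α i)
    (L : (Fin (n + 1) → ℝ) →ₗ[ℝ] ℝ) :
    (∃ μ : Measure ℝ, μ (Set.Icc a b)ᶜ = 0 ∧
      ∀ i : Fin (n + 1),
        IntegrableOn (fun x : ℝ => x ^ (α i)) (Set.Icc a b) μ ∧
        L (Pi.single i 1) = ∫ x in Set.Icc a b, x ^ (α i) ∂μ) ↔
    (∀ c : Fin (n + 1) → ℝ,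
      (∀ x ∈ Set.Icc a b, 0 ≤ ∑ i, c i * x ^ (α i)) → 0 ≤ L c) := by
  classical
  -- expansion of a linear functional through coefficients
  have hexp : ∀ (c : Fin (n + 1) → ℝ), L c = ∑ i, c i * L (Pi.single i 1) := by
    intro c
    have hc : c = ∑ i, c i • (Pi.single i 1 : Fin (n + 1) → ℝ) := by
      funext j
      simp [Finset.sum_apply, Pi.single_apply, mul_comm]
    conv_lhs => rw [hc]
    rw [map_sum]
    simp [smul_eq_mul]
  constructor
  · rintro ⟨μ, hμc, hμ⟩ c hc
    have hint : ∀ i : Fin (n + 1),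
        IntegrableOn (fun x : ℝ => c i * x ^ (α i)) (Set.Icc a b) μ :=
      fun i => (hμ i).1.const_mul _
    have hsum : L c = ∫ x in Set.Icc a b, ∑ i, c i * x ^ (α i) ∂μ := by
      rw [hexp c, integral_finset_sum _ (fun i _ => hint i)]
      refine Finset.sum_congr rfl fun i _ => ?_
      rw [(hμ i).2, integral_const_mul]
    rw [hsum]
    exact setIntegral_nonneg measurableSet_Icc hc
  · intro hpos
    -- continuity of power functions on [a,b]
    have hcont : ∀ i, ContinuousOn (fun x : ℝ => x ^ (α i)) (Set.Icc a b) := by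
      intro i
      rcases eq_or_lt_of_le ha with h0' | hapos
      · obtain ⟨hα0, hαnn⟩ := h0 h0'.symm
        rcases eq_or_lt_of_le (hαnn i) with hzero | hposα
        · simp only [← hzero, Real.rpow_zero]
          exact continuousOn_const
        · intro x _
          exact (Real.continuousAt_rpow_const x (α i) (Or.inr hposα.le)).continuousWithinAt
      · intro x hx
        exact (Real.continuousAt_rpow_const x (α i)
          (Or.inl (ne_of_gt (lt_of_lt_of_le hapos hx.1)))).continuousWithinAt
    set P : ℝ → (Fin (n + 1) → ℝ) := fun x i => x ^ (α i) with hPdef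
    have hPcont : ContinuousOn P (Set.Icc a b) := by
      apply continuousOn_pi.2
      intro i
      exact hcont i
    set K : Set (Fin (n + 1) → ℝ) := P '' Set.Icc a b with hKdef
    have hKco : IsCompact K := isCompact_Icc.image_of_continuousOn hPcont
    have hKne : K.Nonempty := ⟨P a, Set.mem_image_of_mem _ (Set.left_mem_Icc.2 hab.le)⟩
    set D : Set (Fin (n + 1) → ℝ) := convexHull ℝ K with hDdef
    have hDco : IsCompact D := isCompact_convexHull_of_isCompact hKco hKne
    have hDconv : Convex ℝ D := convex_convexHull ℝ K
    have hKD : K ⊆ D := subset_convexHull ℝ K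
    have hDne : D.Nonempty := hKne.mono hKD
    -- a positive lower bound for the first coordinate on D
    obtain ⟨m, hm, hmK⟩ : ∃ m : ℝ, 0 < m ∧ ∀ x ∈ Set.Icc a b, m ≤ x ^ (α 0) := by
      obtain ⟨x₀, hx₀, hminOn⟩ :=
        isCompact_Icc.exists_isMinOn (Set.nonempty_Icc.2 hab.le) (hcont 0)
      refine ⟨x₀ ^ (α 0), ?_, fun x hx => hminOn hx⟩
      rcases eq_or_lt_of_le ha with h0' | hapos
      · rw [(h0 h0'.symm).1, Real.rpow_zero]; exact one_pos
      · exact Real.rpow_pos_of_pos (lt_of_lt_of_le hapos hx₀.1) _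
    have hmD : ∀ q ∈ D, m ≤ q 0 := by
      have hsub : D ⊆ {q : Fin (n + 1) → ℝ | m ≤ q 0} := by
        apply convexHull_min
        · rintro _ ⟨x, hx, rfl⟩
          exact hmK x hx
        · exact convex_halfSpace_ge ⟨fun _ _ => rfl, fun _ _ => rfl⟩ m
      exact fun q hq => hsub hq
    -- the (closed convex) moment cone
    set C : Set (Fin (n + 1) → ℝ) := {v | ∃ t : ℝ, 0 ≤ t ∧ ∃ q ∈ D, v = t • q} with hCdef
    have hCcone : ∀ (s : ℝ), 0 ≤ s → ∀ v ∈ C, s • v ∈ C := by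
      rintro s hs v ⟨t, ht, q, hq, rfl⟩
      exact ⟨s * t, mul_nonneg hs ht, q, hq, smul_smul s t q⟩
    have hKC : K ⊆ C := fun p hp => ⟨1, zero_le_one, p, hKD hp, (one_smul _ _).symm⟩
    have h0C : (0 : Fin (n + 1) → ℝ) ∈ C :=
      ⟨0, le_refl 0, hDne.choose, hDne.choose_spec, (zero_smul _ _).symm⟩
    have hCconv : Convex ℝ C := by
      rintro v1 ⟨t1, ht1, q1, hq1, rfl⟩ v2 ⟨t2, ht2, q2, hq2, rfl⟩ s1 s2 hs1 hs2 hs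
      by_cases hT : s1 * t1 + s2 * t2 = 0
      · have h1 : s1 * t1 = 0 := by nlinarith [mul_nonneg hs1 ht1, mul_nonneg hs2 ht2]
        have h2 : s2 * t2 = 0 := by nlinarith [mul_nonneg hs1 ht1, mul_nonneg hs2 ht2]
        refine ⟨0, le_refl 0, q1, hq1, ?_⟩
        rw [smul_smul, smul_smul, h1, h2]
        simp
      · have hT' : 0 < s1 * t1 + s2 * t2 :=
          lt_of_le_of_ne (by positivity) (Ne.symm hT)
        refine ⟨s1 * t1 + s2 * t2, hT'.le,
          (s1 * t1 / (s1 * t1 + s2 * t2)) • q1 + (s2 * t2 / (s1 * t1 + s2 * t2)) • q2,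
          hDconv hq1 hq2 (by positivity) (by positivity) (by field_simp), ?_⟩
        have e1 : (s1 * t1 + s2 * t2) * (s1 * t1 / (s1 * t1 + s2 * t2)) = s1 * t1 := by
          field_simp
        have e2 : (s1 * t1 + s2 * t2) * (s2 * t2 / (s1 * t1 + s2 * t2)) = s2 * t2 := by
          field_simp
        rw [smul_add, smul_smul, smul_smul, smul_smul, smul_smul, e1, e2]
    have hCclosed : IsClosed C := by
      apply IsSeqClosed.isClosed
      intro u v huC huv
      choose ts hts qs hqs hu using huC
      obtain ⟨q, hqD, φ, hφ, hqlim⟩ := hDco.isSeqCompact hqs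
      have hq0 : 0 < q 0 := lt_of_lt_of_le hm (hmD q hqD)
      have huφ : Filter.Tendsto (u ∘ φ) Filter.atTop (nhds v) := huv.comp hφ.tendsto_atTop
      have hnum : Filter.Tendsto (fun k => u (φ k) 0) Filter.atTop (nhds (v 0)) :=
        ((continuous_apply 0).tendsto v).comp huφ
      have hden : Filter.Tendsto (fun k => qs (φ k) 0) Filter.atTop (nhds (q 0)) :=
        ((continuous_apply 0).tendsto q).comp hqlim
      have htt : ∀ k, ts k = u k 0 / qs k 0 := by
        intro k
        have h0' : qs k 0 ≠ 0 := ne_of_gt (lt_of_lt_of_le hm (hmD _ (hqs k)))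
        rw [hu k]
        simp only [Pi.smul_apply, smul_eq_mul]
        field_simp
      have htlim : Filter.Tendsto (fun k => ts (φ k)) Filter.atTop (nhds (v 0 / q 0)) := by
        simp only [htt]
        exact hnum.div hden (ne_of_gt hq0)
      have hvq : Filter.Tendsto (fun k => ts (φ k) • qs (φ k)) Filter.atTop
          (nhds ((v 0 / q 0) • q)) := htlim.smul hqlim
      have hveq : v = (v 0 / q 0) • q := by
        refine tendsto_nhds_unique ?_ hvq
        have : (fun k => ts (φ k) • qs (φ k)) = u ∘ φ := by
          funext k
          exact (hu (φ k)).symm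
        rw [this]
        exact huφ
      have ht0 : 0 ≤ v 0 / q 0 := ge_of_tendsto' htlim (fun k => hts (φ k))
      exact ⟨v 0 / q 0, ht0, q, hqD, hveq⟩
    set v : Fin (n + 1) → ℝ := fun i => L (Pi.single i 1) with hvdef
    have hvC : v ∈ C := by
      by_contra hvC
      obtain ⟨f, u, hfC, hfv⟩ := geometric_hahn_banach_closed_point hCconv hCclosed hvC
      have hu : 0 < u := by
        have := hfC 0 h0C
        simpa using this
      have hfK : ∀ p ∈ K, f p ≤ 0 := by
        intro p hp
        by_contra hfp
        push_neg at hfp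
        have hmem : ((u + 1) / f p) • p ∈ C :=
          hCcone _ (by positivity) p (hKC hp)
        have := hfC _ hmem
        rw [ContinuousLinearMap.map_smul, smul_eq_mul, div_mul_cancel₀ _ (ne_of_gt hfp)] at this
        linarith
      have hfexp : ∀ y : Fin (n + 1) → ℝ, f y = ∑ i, y i * f (Pi.single i 1) := by
        intro y
        have hy : y = ∑ i, y i • (Pi.single i 1 : Fin (n + 1) → ℝ) := by
          funext j
          simp [Finset.sum_apply, Pi.single_apply, mul_comm]
        conv_lhs => rw [hy]
        rw [map_sum]
        simp [smul_eq_mul]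
      set c : Fin (n + 1) → ℝ := fun i => -f (Pi.single i 1) with hcdef
      have hLc : 0 ≤ L c := by
        apply hpos
        intro x hx
        have hPx : f (P x) ≤ 0 := hfK (P x) (Set.mem_image_of_mem _ hx)
        rw [hfexp (P x)] at hPx
        have : ∑ i, c i * x ^ (α i) = -∑ i, P x i * f (Pi.single i 1) := by
          rw [← Finset.sum_neg_distrib]
          refine Finset.sum_congr rfl fun i _ => ?_
          simp [hcdef, hPdef]
          ring
        rw [this]
        linarith
      have hLcv : L c = -f v := by
        rw [hexp c, hfexp v]
        rw [← Finset.sum_neg_distrib]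
        refine Finset.sum_congr rfl fun i _ => ?_
        simp [hcdef, hvdef]
        ring
      rw [hLcv] at hLc
      linarith
    obtain ⟨t, ht, q, hq, hvq⟩ := hvC
    rw [hDdef, convexHull_eq] at hq
    obtain ⟨ι, s, w, z, hw0, hw1, hz, hcm⟩ := hq
    have hcm' : ∑ j ∈ s, w j • z j = q := by
      rw [← Finset.centerMass_eq_of_sum_1 _ _ hw1]
      exact hcm
    -- pick points on the curve
    have hz' : ∀ j : ι, ∃ x : ℝ, x ∈ Set.Icc a b ∧ (j ∈ s → P x = z j) := by
      intro j
      by_cases hj : j ∈ s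
      · obtain ⟨x, hx, hPx⟩ := hz j hj
        exact ⟨x, hx, fun _ => hPx⟩
      · exact ⟨a, Set.left_mem_Icc.2 hab.le, fun h => absurd h hj⟩
    choose xs hxs hPxs using hz'
    set μ : Measure ℝ := ∑ j ∈ s, (ENNReal.ofReal (t * w j)) • Measure.dirac (xs j) with hμdef
    have hdint : ∀ (g : ℝ → ℝ), Integrable g μ := by
      intro g
      rw [hμdef]
      apply integrable_finset_sum_measure.2
      intro j hj
      apply Integrable.smul_measure _ ENNReal.ofReal_ne_top
      have hae : g =ᵐ[Measure.dirac (xs j)] fun _ => g (xs j) := by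
        rw [Filter.EventuallyEq, ae_dirac_eq]
        exact Filter.eventually_pure.2 rfl
      exact (integrable_const (g (xs j))).congr hae.symm
    have hμcompl : μ (Set.Icc a b)ᶜ = 0 := by
      rw [hμdef, Measure.finset_sum_apply]
      refine Finset.sum_eq_zero fun j hj => ?_
      rw [Measure.smul_apply, Measure.dirac_apply,
        Set.indicator_of_notMem (by simpa using hxs j)]
      simp
    have hres : μ.restrict (Set.Icc a b) = μ := by
      apply Measure.restrict_eq_self_of_ae_mem
      rw [ae_iff]
      have : {x : ℝ | ¬x ∈ Set.Icc a b} = (Set.Icc a b)ᶜ := rfl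
      rw [this]
      exact hμcompl
    refine ⟨μ, hμcompl, fun i => ?_⟩
    have hint : IntegrableOn (fun x : ℝ => x ^ (α i)) (Set.Icc a b) μ := by
      rw [IntegrableOn, hres]
      exact hdint _
    refine ⟨hint, ?_⟩
    have hI : ∫ x in Set.Icc a b, x ^ (α i) ∂μ = ∑ j ∈ s, (t * w j) * (xs j) ^ (α i) := by
      rw [hres, hμdef]
      rw [integral_finset_sum_measure]
      · refine Finset.sum_congr rfl fun j hj => ?_
        rw [integral_smul_measure, integral_dirac, ENNReal.toReal_ofReal
          (mul_nonneg ht (hw0 j hj)), smul_eq_mul]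
      · intro j hj
        apply Integrable.smul_measure _ ENNReal.ofReal_ne_top
        have hae : (fun x : ℝ => x ^ (α i)) =ᵐ[Measure.dirac (xs j)]
            fun _ => (xs j) ^ (α i) := by
          rw [Filter.EventuallyEq, ae_dirac_eq]
          exact Filter.eventually_pure.2 rfl
        exact (integrable_const _).congr hae.symm
    rw [hI]
    have hvi : L (Pi.single i 1) = t * q i := by
      have := congrFun hvq i
      simpa [hvdef] using this
    rw [hvi, ← hcm']
    rw [Finset.sum_apply]
    rw [Finset.mul_sum]
    refine Finset.sum_congr rfl fun j hj => ?_
    have hzz : z j i = (xs j) ^ (α i) := (congrFun (hPxs j hj) i).symm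
    simp [hzz]
    ring
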